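/- In W(F₄) (2-adic Witt vectors of F₄), let ζ be a Teichmüller lift of a primitive cube root of unity and let √(-7) denote the square root of -7 congruent to 1 mod 4. Then the elements π = 1 + 2ζ and α = (1 - 2ζ)/√(-7) satisfy |π| = 3 and |α| = -1, where |x+yT| = x·σ(x) + 2·y·σ(y) as above. In particular the determinant map to Z₂ˣ is surjective when restricted to the subgroup generated by π, α, and units of determinant 1. -/

import Mathlib

noncomputable section

/-- The field `F₄` with four elements. -/
abbrev F4 := GaloisField 2 2

/-- The ring of Witt vectors `W(F₄)`. -/
abbrev W4 := WittVector 2 F4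

/-- The Frobenius lift `σ` on `W(F₄)` (lifting `x ↦ x²`). -/
def σW : W4 →+* W4 := WittVector.frobenius

theorem frob_frob (a : F4) : frobenius F4 2 (frobenius F4 2 a) = a := by
  haveI : Fintype F4 := Fintype.ofFinite F4
  have hcard : Fintype.card F4 = 4 := by
    have := GaloisField.card 2 2 (by norm_num)
    simpa using this
  simp only [frobenius_def]
  rw [← pow_mul]
  calc a ^ (2 * 2) = a ^ Fintype.card F4 := by rw [hcard]
    _ = a := FiniteField.pow_card a

/-- On `W(F₄)` the Frobenius lift is an involution. -/
theorem σW_σW (x : W4) : σW (σW x) = x := by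
  have h : σW = WittVector.map (frobenius F4 2) :=
    WittVector.frobenius_eq_map_frobenius 2
  rw [h]
  ext n
  simp [WittVector.map_coeff, frob_frob]

/-- The ring `End = W(F₄)⟨T⟩/(T² + 2, ζT − Tζ²)`, realized concretely: the pair
`(x, y)` represents `x + y·T`, and multiplication is twisted by the Frobenius lift `σ`:
`(x + yT)·(x' + y'T) = (x x' − 2 y σ(y')) + (x y' + y σ(x'))·T`. -/
def EndF4 : Type := W4 × W4

instance : Zero EndF4 := ⟨((0 : W4), (0 : W4))⟩
instance : One EndF4 := ⟨((1 : W4), (0 : W4))⟩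
instance : Add EndF4 := ⟨fun a b => (a.1 + b.1, a.2 + b.2)⟩
instance : Neg EndF4 := ⟨fun a => (-a.1, -a.2)⟩
instance : Mul EndF4 :=
  ⟨fun a b => (a.1 * b.1 - 2 * (a.2 * σW b.2), a.1 * b.2 + a.2 * σW b.1)⟩

theorem EndF4.add_def (a b : EndF4) : a + b = (a.1 + b.1, a.2 + b.2) := rfl
theorem EndF4.mul_def (a b : EndF4) :
    a * b = (a.1 * b.1 - 2 * (a.2 * σW b.2), a.1 * b.2 + a.2 * σW b.1) := rfl
theorem EndF4.neg_def (a : EndF4) : -a = (-a.1, -a.2) := rfl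
theorem EndF4.zero_def : (0 : EndF4) = ((0 : W4), (0 : W4)) := rfl
theorem EndF4.one_def : (1 : EndF4) = ((1 : W4), (0 : W4)) := rfl

set_option maxHeartbeats 1000000 in
instance : Ring EndF4 :=
  Ring.ofMinimalAxioms
    (fun a b c => by
      exact Prod.ext (show (a.1 + b.1) + c.1 = a.1 + (b.1 + c.1) by ring)
        (show (a.2 + b.2) + c.2 = a.2 + (b.2 + c.2) by ring))
    (fun a => by
      exact Prod.ext (show (0 : W4) + a.1 = a.1 by simp) (show (0 : W4) + a.2 = a.2 by simp))
    (fun a => by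
      exact Prod.ext (show -a.1 + a.1 = 0 by simp) (show -a.2 + a.2 = 0 by simp))
    (fun a b c => by
      exact Prod.ext
        (show (a.1 * b.1 - 2 * (a.2 * σW b.2)) * c.1
            - 2 * ((a.1 * b.2 + a.2 * σW b.1) * σW c.2)
          = a.1 * (b.1 * c.1 - 2 * (b.2 * σW c.2))
            - 2 * (a.2 * σW (b.1 * c.2 + b.2 * σW c.1)) by
          simp only [map_add, map_mul, map_sub, map_ofNat, σW_σW]; ring)
        (show (a.1 * b.1 - 2 * (a.2 * σW b.2)) * c.2
            + (a.1 * b.2 + a.2 * σW b.1) * σW c.1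
          = a.1 * (b.1 * c.2 + b.2 * σW c.1)
            + a.2 * σW (b.1 * c.1 - 2 * (b.2 * σW c.2)) by
          simp only [map_add, map_mul, map_sub, map_ofNat, σW_σW]; ring))
    (fun a => by
      exact Prod.ext (show 1 * a.1 - 2 * (0 * σW a.2) = a.1 by simp)
        (show 1 * a.2 + 0 * σW a.1 = a.2 by simp))
    (fun a => by
      exact Prod.ext (show a.1 * 1 - 2 * (a.2 * σW 0) = a.1 by simp)
        (show a.1 * 0 + a.2 * σW 1 = a.2 by simp))
    (fun a b c => by
      exact Prod.ext
        (show a.1 * (b.1 + c.1) - 2 * (a.2 * σW (b.2 + c.2))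
          = (a.1 * b.1 - 2 * (a.2 * σW b.2)) + (a.1 * c.1 - 2 * (a.2 * σW c.2)) by
          simp only [map_add]; ring)
        (show a.1 * (b.2 + c.2) + a.2 * σW (b.1 + c.1)
          = (a.1 * b.2 + a.2 * σW b.1) + (a.1 * c.2 + a.2 * σW c.1) by
          simp only [map_add]; ring))
    (fun a b c => by
      exact Prod.ext
        (show (a.1 + b.1) * c.1 - 2 * ((a.2 + b.2) * σW c.2)
          = (a.1 * c.1 - 2 * (a.2 * σW c.2)) + (b.1 * c.1 - 2 * (b.2 * σW c.2)) by ring)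
        (show (a.1 + b.1) * c.2 + (a.2 + b.2) * σW c.1
          = (a.1 * c.2 + a.2 * σW c.1) + (b.1 * c.2 + b.2 * σW c.1) by ring))

/-- The element `T` of `End`. -/
def Tel : EndF4 := ((0 : W4), (1 : W4))

/-- The canonical inclusion `W(F₄) → End`. -/
def ιW : W4 → EndF4 := fun a => (a, (0 : W4))

/-- The determinant `|x + yT| = x·σ(x) + 2·y·σ(y)`. -/
def detW : EndF4 → W4 := fun a => a.1 * σW a.1 + 2 * (a.2 * σW a.2)


private lemma sigma_teich (z : F4) :
    σW (WittVector.teichmuller 2 z) = (WittVector.teichmuller 2 z)^2 := by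
  have h : σW = WittVector.map (frobenius F4 2) :=
    WittVector.frobenius_eq_map_frobenius 2
  rw [h, WittVector.map_teichmuller, frobenius_def]
  rw [← MonoidHom.map_pow]

private lemma seven_ne : (7 : W4) ≠ 0 := by
  intro h
  have h2 := congrArg (WittVector.constantCoeff (p := 2) (R := F4)) h
  rw [map_ofNat, map_zero] at h2
  have h3 : ((7:ℕ) : F4) = 0 := by exact_mod_cast h2
  rw [CharP.cast_eq_zero_iff F4 2 7] at h3
  omega

private lemma zeta_facts (z : F4) (hz : z ^ 2 + z + 1 = 0) :
    (WittVector.teichmuller 2 z)^3 = 1 ∧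
    (WittVector.teichmuller 2 z)^2 + (WittVector.teichmuller 2 z) + 1 = 0 := by
  set ζ := WittVector.teichmuller 2 z with hζ
  have hz3 : z^3 = 1 := by linear_combination (z - 1) * hz
  have hc : ζ^3 = 1 := by
    rw [hζ, ← MonoidHom.map_pow, hz3, MonoidHom.map_one]
  refine ⟨hc, ?_⟩
  have hne : ζ - 1 ≠ 0 := by
    rw [sub_ne_zero]
    intro h
    have := congrArg (fun w : W4 => w.coeff 0) h
    rw [hζ] at this
    simp only [WittVector.teichmuller_coeff_zero, WittVector.one_coeff_zero] at this
    rw [this] at hz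
    have h3 : ((3:ℕ) : F4) = 0 := by push_cast; linear_combination hz
    rw [CharP.cast_eq_zero_iff F4 2 3] at h3
    omega
  have hmul : (ζ - 1) * (ζ^2 + ζ + 1) = 0 := by linear_combination hc
  rcases mul_eq_zero.1 hmul with h | h
  · exact absurd h hne
  · exact h

private lemma sigma_fixed (s : W4)
    (hs0 : s ∈ Set.range (WittVector.map (algebraMap (ZMod 2) F4))) : σW s = s := by
  obtain ⟨t, rfl⟩ := hs0
  have h : σW = WittVector.map (frobenius F4 2) := WittVector.frobenius_eq_map_frobenius 2
  rw [h]
  ext n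
  simp only [WittVector.map_coeff]
  rw [frobenius_def, ← map_pow]
  congr 1
  exact (show ∀ a : ZMod 2, a^2 = a by decide) _

open PadicInt

private lemma two_dvd_iff' (a : ℤ_[2]) : (2 : ℤ_[2]) ∣ a ↔ PadicInt.toZMod a = 0 := by
  rw [show (PadicInt.toZMod a = 0) ↔ a ∈ RingHom.ker (PadicInt.toZMod : ℤ_[2] →+* ZMod 2) from
    RingHom.mem_ker.symm, PadicInt.ker_toZMod, PadicInt.maximalIdeal_eq_span_p, Ideal.mem_span_singleton]
  norm_num

private lemma unit_not_two_dvd (v : ℤ_[2]ˣ) : ¬ (2:ℤ_[2]) ∣ (v : ℤ_[2]) := by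
  intro h
  have h1 : (v:ℤ_[2]) ∣ 1 := ⟨(v⁻¹ : ℤ_[2]ˣ), by rw [← Units.val_mul, mul_inv_cancel, Units.val_one]⟩
  have h2 : IsUnit (2:ℤ_[2]) := isUnit_of_dvd_one (h.trans h1)
  exact (PadicInt.prime_p (p := 2)).not_unit (by simpa using h2)

private lemma zmod2_eq_one' : ∀ c : ZMod 2, c ≠ 0 → c = 1 := by decide
private lemma zmod2_eq_one {c : ZMod 2} (hc : c ≠ 0) : c = 1 := zmod2_eq_one' c hc

private lemma unit_toZMod (v : ℤ_[2]ˣ) : PadicInt.toZMod (v : ℤ_[2]) = 1 := by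
  apply zmod2_eq_one
  intro h
  exact unit_not_two_dvd v ((two_dvd_iff' _).2 h)

private lemma odd_add_odd {a b : ℤ_[2]} (ha : ¬ (2:ℤ_[2]) ∣ a) (hb : ¬ (2:ℤ_[2]) ∣ b) :
    (2:ℤ_[2]) ∣ a + b := by
  rw [two_dvd_iff'] at ha hb ⊢
  rw [map_add, zmod2_eq_one ha, zmod2_eq_one hb]
  decide

private lemma growth (x : ℤ_[2]ˣ) (w0 : ℤ_[2]) (hx : (x:ℤ_[2]) = 1 + 4 * w0)
    (hw0 : ¬ (2:ℤ_[2]) ∣ w0) (m : ℕ) :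
    ∃ w : ℤ_[2], ((x ^ (2^m : ℕ) : ℤ_[2]ˣ) : ℤ_[2]) = 1 + 2^(m+2) * w ∧ ¬ (2:ℤ_[2]) ∣ w := by
  induction m with
  | zero => exact ⟨w0, by simpa [show (2:ℤ_[2])^2 = 4 by norm_num] using hx, hw0⟩
  | succ m ih =>
    obtain ⟨w, hw, hodd⟩ := ih
    refine ⟨w + 2^(m+1) * w^2, ?_, ?_⟩
    · have h1 : (x ^ (2^(m+1) : ℕ) : ℤ_[2]ˣ) = (x ^ (2^m : ℕ))^2 := by
        rw [← pow_mul, pow_succ]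
      rw [h1, Units.val_pow_eq_pow_val, hw]
      ring
    · intro h
      apply hodd
      have h2 : (2:ℤ_[2]) ∣ 2^(m+1) * w^2 := ⟨2^m * w^2, by ring⟩
      have h3 := dvd_sub h h2
      simpa using h3

private lemma approx (x : ℤ_[2]ˣ) (w0 : ℤ_[2]) (hx : (x:ℤ_[2]) = 1 + 4 * w0)
    (hw0 : ¬ (2:ℤ_[2]) ∣ w0) :
    ∀ n : ℕ, 2 ≤ n → ∀ u : ℤ_[2]ˣ, (4:ℤ_[2]) ∣ (u:ℤ_[2]) - 1 →
      ∃ k : ℤ, (2:ℤ_[2])^n ∣ ((x^k : ℤ_[2]ˣ) : ℤ_[2]) - u := by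
  intro n hn
  induction n, hn using Nat.le_induction with
  | base =>
    intro u hu
    refine ⟨0, ?_⟩
    simpa [show (2:ℤ_[2])^2 = 4 by norm_num] using (dvd_neg.2 hu)
  | succ n hn ih =>
    intro u hu
    obtain ⟨k, t, ht⟩ := ih u hu
    by_cases hdvd : (2:ℤ_[2]) ∣ t
    · obtain ⟨r, rfl⟩ := hdvd
      exact ⟨k, r, by rw [ht]; ring⟩
    · obtain ⟨w, hw, hwodd⟩ := growth x w0 hx hw0 (n-2)
      have hn2 : n - 2 + 2 = n := by omega
      rw [hn2] at hw
      refine ⟨k + (2^(n-2) : ℕ), ?_⟩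
      have hz : (x ^ (k + ((2^(n-2):ℕ):ℤ)) : ℤ_[2]ˣ) = x^k * x^((2^(n-2)):ℕ) := by
        rw [zpow_add, zpow_natCast]
      have hpar : (2:ℤ_[2]) ∣ t + w * ((x^k : ℤ_[2]ˣ) : ℤ_[2]) := by
        apply odd_add_odd hdvd
        intro hdw
        rcases (mul_dvd_mul_left w (dvd_refl (2:ℤ_[2]))) with _
        -- 2 prime: 2 ∣ w * v → 2 ∣ w or 2 ∣ v
        have hp : Prime (2:ℤ_[2]) := by
          have := PadicInt.prime_p (p := 2); simpa using this
        rcases hp.2.2 _ _ hdw with h | h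
        · exact hwodd h
        · exact unit_not_two_dvd (x^k) h
      obtain ⟨r, hr⟩ := hpar
      refine ⟨r, ?_⟩
      rw [hz, Units.val_mul, hw]
      have : ((x^k : ℤ_[2]ˣ) : ℤ_[2]) = u + 2^n * t := by rw [← ht]; ring
      rw [this]
      rw [this] at hr
      calc (↑u + 2^n*t) * (1 + 2^n * w) - ↑u
          = 2^n * (t + w * (↑u + 2^n*t)) := by ring
        _ = 2^n * (2*r) := by rw [hr]
        _ = (2:ℤ_[2])^(n+1) * r := by ring

theorem dense_pm3 :
    (Subgroup.closure {u : ℤ_[2]ˣ | (u : ℤ_[2]) = 3 ∨ (u : ℤ_[2]) = -1}).topologicalClosure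
      = ⊤ := by
  set S : Set ℤ_[2]ˣ := {u : ℤ_[2]ˣ | (u : ℤ_[2]) = 3 ∨ (u : ℤ_[2]) = -1} with hS
  set H := Subgroup.closure S with hH
  -- 3 is a unit
  have hnd3 : ¬ (2:ℤ_[2]) ∣ 3 := by
    rw [two_dvd_iff']
    rw [show (PadicInt.toZMod (3 : ℤ_[2])) = 3 from map_ofNat _ 3]
    decide
  have h3 : IsUnit (3:ℤ_[2]) := by
    rw [PadicInt.isUnit_iff]
    refine le_antisymm (PadicInt.norm_le_one _) ?_
    by_contra hlt
    push_neg at hlt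
    exact hnd3 ((PadicInt.norm_lt_one_iff_dvd _).1 (by simpa using hlt))
  have hu3 : (h3.unit : ℤ_[2]) = 3 := h3.unit_spec
  have hg3 : h3.unit ∈ H := Subgroup.subset_closure (Or.inl hu3)
  have hgm1 : (-1 : ℤ_[2]ˣ) ∈ H := Subgroup.subset_closure (Or.inr (by simp))
  set x : ℤ_[2]ˣ := -h3.unit with hxdef
  have hxH : x ∈ H := by
    rw [hxdef, show -h3.unit = (-1) * h3.unit from (neg_one_mul _).symm]
    exact H.mul_mem hgm1 hg3
  have hxval : (x : ℤ_[2]) = 1 + 4 * (-1) := by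
    rw [hxdef]; rw [Units.val_neg, hu3]; ring
  have hw0 : ¬ (2:ℤ_[2]) ∣ (-1 : ℤ_[2]) := by
    rw [two_dvd_iff', map_neg, map_one]; decide
  -- density
  apply SetLike.ext'
  rw [Subgroup.topologicalClosure_coe, Subgroup.coe_top, ← dense_iff_closure_eq]
  intro u
  have hemb : Topology.IsEmbedding (Units.val : ℤ_[2]ˣ → ℤ_[2]) :=
    Units.isOpenEmbedding_val.toIsEmbedding
  rw [hemb.closure_eq_preimage_closure_image, Set.mem_preimage, Metric.mem_closure_iff]
  intro ε hε
  obtain ⟨n0, hn0⟩ : ∃ n : ℕ, (1/2 : ℝ) ^ n < ε := exists_pow_lt_of_lt_one hε (by norm_num)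
  set n := max n0 2 with hndef
  have hn2 : 2 ≤ n := le_max_right _ _
  have hnlt : (1/2 : ℝ)^n ≤ (1/2:ℝ)^n0 :=
    pow_le_pow_of_le_one (by norm_num) (by norm_num) (le_max_left _ _)
  -- the target unit: u or -u is ≡ 1 mod 4
  have huodd : ¬ (2:ℤ_[2]) ∣ (u:ℤ_[2]) := unit_not_two_dvd u
  have h2du : (2:ℤ_[2]) ∣ (u:ℤ_[2]) - 1 := by
    rw [two_dvd_iff', map_sub, map_one, unit_toZMod]; decide
  obtain ⟨v, hv⟩ := h2du
  have main : ∃ g ∈ H, (2:ℤ_[2])^n ∣ ((g : ℤ_[2]ˣ) : ℤ_[2]) - u := by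
    by_cases hvd : (2:ℤ_[2]) ∣ v
    · -- u ≡ 1 mod 4
      obtain ⟨r, rfl⟩ := hvd
      have h4 : (4:ℤ_[2]) ∣ (u:ℤ_[2]) - 1 := ⟨r, by rw [hv]; ring⟩
      obtain ⟨k, hk⟩ := approx x (-1) hxval hw0 n hn2 u h4
      exact ⟨x^k, H.zpow_mem hxH k, hk⟩
    · -- -u ≡ 1 mod 4
      have hv1 : (2:ℤ_[2]) ∣ v + 1 := by
        rw [two_dvd_iff', map_add, map_one, zmod2_eq_one (fun h => hvd ((two_dvd_iff' _).2 h))]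
        decide
      obtain ⟨r, hr⟩ := hv1
      have h4 : (4:ℤ_[2]) ∣ ((-u : ℤ_[2]ˣ):ℤ_[2]) - 1 := by
        refine ⟨-r, ?_⟩
        rw [Units.val_neg]
        have : (u:ℤ_[2]) = 1 + 2*v := by rw [← hv]; ring
        rw [this, show v = 2*r - 1 by rw [← hr]; ring]
        ring
      obtain ⟨k, hk⟩ := approx x (-1) hxval hw0 n hn2 (-u) h4
      refine ⟨-(x^k), ?_, ?_⟩
      · rw [show -(x^k) = (-1) * x^k from (neg_one_mul _).symm]
        exact H.mul_mem hgm1 (H.zpow_mem hxH k)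
      · rw [Units.val_neg]
        obtain ⟨c, hc⟩ := hk
        refine ⟨-c, ?_⟩
        rw [Units.val_neg] at hc
        have : -((x^k : ℤ_[2]ˣ) : ℤ_[2]) - u = -(((x^k : ℤ_[2]ˣ) : ℤ_[2]) - -(u:ℤ_[2])) := by ring
        rw [this, hc]; ring
  obtain ⟨g, hgH, hgd⟩ := main
  refine ⟨(g : ℤ_[2]), Set.mem_image_of_mem _ hgH, ?_⟩
  rw [dist_eq_norm]
  have hnorm : ‖((g:ℤ_[2]ˣ):ℤ_[2]) - u‖ ≤ ((2:ℕ):ℝ)^(-(n:ℤ)) := by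
    rw [PadicInt.norm_le_pow_iff_mem_span_pow, Ideal.mem_span_singleton]
    exact_mod_cast hgd
  calc ‖(u:ℤ_[2]) - g‖ = ‖((g:ℤ_[2]ˣ):ℤ_[2]) - u‖ := by rw [norm_sub_rev]
    _ ≤ ((2:ℕ):ℝ)^(-(n:ℤ)) := hnorm
    _ = (1/2:ℝ)^n := by
        rw [one_div, inv_pow, zpow_neg, inv_inj, ← zpow_natCast]
        norm_num
    _ ≤ (1/2:ℝ)^n0 := hnlt
    _ < ε := hn0


/-- Let `ζ ∈ W(F₄)` be the Teichmüller lift of a primitive cube root of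
unity and `s = √(−7) ∈ ℤ₂ ⊆ W(F₄)` the square root of `−7` with `s ≡ 1 mod 4`.  Then
`π = 1 + 2ζ` and `α = (1 − 2ζ)/√(−7)` satisfy `|π| = 3` and `|α| = −1`.  In particular
(using that `ℤ₂ˣ` is topologically generated by `3` and `−1`) the determinant map to
`ℤ₂ˣ` is surjective when restricted to the subgroup generated by `π`, `α` and the units
of determinant `1`. -/
theorem stmt_2 (z : F4) (hz : z ^ 2 + z + 1 = 0)
    (s : W4) (hs0 : s ∈ Set.range (WittVector.map (algebraMap (ZMod 2) F4)))
    (hs : s ^ 2 = -7) (hs1 : ∃ t : W4, s = 1 + 4 * t) :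
    detW (ιW (1 + 2 * WittVector.teichmuller 2 z)) = 3 ∧
    (∀ α : W4, α * s = 1 - 2 * WittVector.teichmuller 2 z → detW (ιW α) = -1) ∧
    (Subgroup.closure {u : ℤ_[2]ˣ | (u : ℤ_[2]) = 3 ∨ (u : ℤ_[2]) = -1}).topologicalClosure
      = ⊤ := by
  
  obtain ⟨hc, hsum⟩ := zeta_facts z hz
  set ζ := WittVector.teichmuller 2 z with hζ
  refine ⟨?_, ?_, dense_pm3⟩
  · simp only [detW, ιW, map_zero, mul_zero, add_zero, zero_mul]
    rw [map_add, map_one, map_mul, map_ofNat, sigma_teich]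
    linear_combination 2*hsum + 4*hc
  · intro α hα
    simp only [detW, ιW, map_zero, mul_zero, add_zero, zero_mul]
    have hσs := sigma_fixed s hs0
    have h2 := congrArg σW hα
    rw [map_mul, hσs, map_sub, map_one, map_mul, map_ofNat, sigma_teich] at h2
    have hmul : α * σW α * s^2 = (1 - 2*ζ)*(1 - 2*ζ^2) := by
      rw [← hα, ← h2]; ring
    rw [hs] at hmul
    have h7 : (1 - 2*ζ)*(1 - 2*ζ^2) = 7 := by linear_combination (-2)*hsum + 4*hc
    rw [h7] at hmul
    have hz0 : (7:W4) * (α * σW α + 1) = 0 := by linear_combination (-1)*hmul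
    rcases mul_eq_zero.1 hz0 with h | h
    · exact absurd h seven_ne
    · exact eq_neg_of_add_eq_zero_left h
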